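/- Short witnesses for multi-connectivity: let G be a directed graph with N nodes in which every node has out-degree at most 2, and let (s_1,t_1),...,(s_k,t_k) be pairs of nodes with k ≤ N such that every s_i reaches t_i. Then there exist a set U of at most √N nodes and, for each pair (s_i,t_i) not covered by U (i.e., no node of U lies on any chosen s_i-to-t_i path), a path P_i from s_i to t_i, such that (a) every pair (s_i,t_i) is either covered by some node of U (meaning some u ∈ U is reachable from s_i and reaches t_i) or has an explicit path P_i, and (b) every node of G appears on at most √N of the explicit paths P_i. -/

import Mathlib

open Relation Finset

/-- Any element of a chain list is reachable from the head and reaches the last element. -/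
private lemma chain_mem_split {α : Type*} {E : α → α → Prop} :
    ∀ (l : List α) (a : α), List.Chain E a l → ∀ v ∈ a :: l,
      ReflTransGen E a v ∧
        ReflTransGen E v (List.getLast (a :: l) (List.cons_ne_nil _ _)) := by
  intro l
  induction l with
  | nil =>
    intro a _ v hv
    simp only [List.mem_singleton] at hv
    subst hv
    simp [ReflTransGen.refl]
  | cons x xs ih =>
    intro a hchain v hv
    rcases List.chain_cons.mp hchain with ⟨hax, hxxs⟩
    have hlast : List.getLast (a :: x :: xs) (List.cons_ne_nil _ _)
        = List.getLast (x :: xs) (List.cons_ne_nil _ _) := List.getLast_cons_cons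
    rcases List.mem_cons.mp hv with hva | hvx
    · subst hva
      refine ⟨ReflTransGen.refl, ?_⟩
      rw [hlast]
      exact ReflTransGen.head hax
        (List.relationReflTransGen_of_exists_isChain_cons xs hxxs rfl)
    · obtain ⟨h1, h2⟩ := ih x hxxs v hvx
      rw [hlast]
      exact ⟨ReflTransGen.head hax h1, h2⟩

open scoped Classical in
/-- Short witnesses for multi-connectivity: in a directed graph on `N` nodes
with out-degree at most 2, given `k ≤ N` pairs `(s i, t i)` with `s i` reaching `t i`, there is
a set `U` of at most `√N` nodes and explicit paths `P i` such that every pair is either covered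
by a node of `U` or has an explicit path from `s i` to `t i`, and every node appears on at most
`√N` of the explicit paths of uncovered pairs. -/
theorem multiconn_short_witnesses {N k : ℕ} (E : Fin N → Fin N → Prop)
    (hdeg : ∀ v : Fin N, (Finset.univ.filter (fun w : Fin N => E v w)).card ≤ 2)
    (hk : k ≤ N) (s t : Fin k → Fin N)
    (hreach : ∀ i : Fin k, Relation.ReflTransGen E (s i) (t i)) :
    ∃ (U : Finset (Fin N)) (P : Fin k → List (Fin N)),
      U.card ≤ Nat.sqrt N ∧
      (∀ i : Fin k,
        (∃ u ∈ U, Relation.ReflTransGen E (s i) u ∧ Relation.ReflTransGen E u (t i)) ∨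
        ((P i).Chain' E ∧ (P i).head? = some (s i) ∧ (P i).getLast? = some (t i))) ∧
      (∀ v : Fin N,
        (Finset.univ.filter (fun i : Fin k =>
          ¬ (∃ u ∈ U, Relation.ReflTransGen E (s i) u ∧ Relation.ReflTransGen E u (t i)) ∧
          v ∈ P i)).card ≤ Nat.sqrt N) := by
  set sq := Nat.sqrt N with hsq
  -- choose a chain for each pair
  have hch : ∀ i : Fin k, ∃ l, List.Chain E (s i) l ∧
      List.getLast (s i :: l) (List.cons_ne_nil _ _) = t i := fun i =>
    List.exists_isChain_cons_of_relationReflTransGen (hreach i)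
  choose L hL1 hL2 using hch
  set Q : Fin k → List (Fin N) := fun i => s i :: L i with hQ
  -- membership in a path gives coverage
  have hmem : ∀ (i : Fin k) (v : Fin N), v ∈ Q i →
      ReflTransGen E (s i) v ∧ ReflTransGen E v (t i) := by
    intro i v hv
    have := chain_mem_split (L i) (s i) (hL1 i) v hv
    rwa [hL2 i] at this
  -- coverage predicate and uncovered set
  set cov : Finset (Fin N) → Fin k → Prop := fun U i =>
    ∃ u ∈ U, ReflTransGen E (s i) u ∧ ReflTransGen E u (t i) with hcov
  set uncov : Finset (Fin N) → Finset (Fin k) := fun U =>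
    Finset.univ.filter (fun i => ¬ cov U i) with huncov
  have hmono : ∀ {U U' : Finset (Fin N)}, U ⊆ U' → ∀ i, cov U i → cov U' i := by
    rintro U U' hUU' i ⟨u, hu, h1, h2⟩
    exact ⟨u, hUU' hu, h1, h2⟩
  -- greedy selection, by strong induction on the budget
  have main : ∀ n (U : Finset (Fin N)), (uncov U).card ≤ n →
      ∃ U' : Finset (Fin N), U ⊆ U' ∧
        U'.card * (sq + 1) ≤ U.card * (sq + 1) + n ∧
        ∀ v : Fin N, ((uncov U').filter (fun i => v ∈ Q i)).card ≤ sq := by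
    intro n
    induction n using Nat.strong_induction_on with
    | _ n ihn =>
      intro U hU
      by_cases hgood : ∀ v : Fin N, ((uncov U).filter (fun i => v ∈ Q i)).card ≤ sq
      · exact ⟨U, Finset.Subset.refl _, Nat.le_add_right _ _, hgood⟩
      · push_neg at hgood
        obtain ⟨v, hv⟩ := hgood
        set F : Finset (Fin k) := (uncov U).filter (fun i => v ∈ Q i) with hF
        have hFsub : F ⊆ uncov U := Finset.filter_subset _ _
        have hFcard : sq + 1 ≤ F.card := hv
        -- v is not already in U
        have hvU : v ∉ U := by
          intro hvmem
          have hFne : F.Nonempty := Finset.card_pos.mp (by omega)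
          obtain ⟨i, hi⟩ := hFne
          rw [hF, Finset.mem_filter] at hi
          obtain ⟨hiu, hivQ⟩ := hi
          rw [huncov, Finset.mem_filter] at hiu
          exact hiu.2 ⟨v, hvmem, hmem i v hivQ⟩
        set U₂ : Finset (Fin N) := insert v U with hU₂
        have hU₂card : U₂.card = U.card + 1 := Finset.card_insert_of_notMem hvU
        -- uncovered set shrinks by at least sq+1
        have hshrink : uncov U₂ ⊆ uncov U \ F := by
          intro i hi
          rw [huncov, Finset.mem_filter] at hi
          have hncov : ¬ cov U₂ i := hi.2
          have hiu : i ∈ uncov U := by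
            rw [huncov, Finset.mem_filter]
            exact ⟨Finset.mem_univ _, fun h =>
              hncov (hmono (Finset.subset_insert _ _) i h)⟩
          refine Finset.mem_sdiff.mpr ⟨hiu, ?_⟩
          intro hiF
          rw [hF, Finset.mem_filter] at hiF
          exact hncov ⟨v, Finset.mem_insert_self _ _, hmem i v hiF.2⟩
        have hcard2 : (uncov U₂).card ≤ n - (sq + 1) := by
          calc (uncov U₂).card ≤ (uncov U \ F).card := Finset.card_le_card hshrink
            _ = (uncov U).card - F.card := Finset.card_sdiff_of_subset hFsub
            _ ≤ n - (sq + 1) := by omega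
        have hnle : sq + 1 ≤ n := le_trans hFcard (le_trans (Finset.card_le_card hFsub) hU)
        obtain ⟨U', hsub', hcard', hgood'⟩ :=
          ihn (n - (sq + 1)) (by omega) U₂ hcard2
        refine ⟨U', (Finset.subset_insert _ _).trans hsub', ?_, hgood'⟩
        rw [hU₂card] at hcard'
        have : (U.card + 1) * (sq + 1) = U.card * (sq + 1) + (sq + 1) := by ring
        omega
  -- apply with the empty set and budget k
  have hstart : (uncov ∅).card ≤ k := le_trans (Finset.card_le_card (Finset.filter_subset _ _))
    (by simp)
  obtain ⟨U, hUsub, hUcard, hUgood⟩ := main k ∅ hstart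
  have hUle : U.card ≤ sq := by
    by_contra hgt
    push_neg at hgt
    have h1 : (sq + 1) * (sq + 1) ≤ U.card * (sq + 1) :=
      Nat.mul_le_mul_right _ hgt
    have h2 : N < (sq + 1) * (sq + 1) := by
      have := Nat.lt_succ_sqrt N
      nlinarith [Nat.lt_succ_sqrt N]
    simp only [Finset.card_empty, Nat.zero_mul, Nat.zero_add] at hUcard
    omega
  refine ⟨U, Q, hUle, ?_, ?_⟩
  · intro i
    right
    refine ⟨?_, rfl, ?_⟩
    · exact hL1 i
    · rw [hQ]
      simp only
      rw [List.getLast?_eq_getLast (List.cons_ne_nil _ _), hL2 i]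
  · intro v
    have heq : (Finset.univ.filter (fun i : Fin k =>
        ¬ (∃ u ∈ U, ReflTransGen E (s i) u ∧ ReflTransGen E u (t i)) ∧ v ∈ Q i))
        = (uncov U).filter (fun i => v ∈ Q i) := by
      rw [huncov, Finset.filter_filter]
    rw [heq]
    exact hUgood v
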